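/- Let I_n denote the modified Bessel function of the first kind of order n, and set r_0(a) = I_1(a)/I_0(a). Then for all a > 0, r_0'(a) < (1 − r_0(a)²)/2. -/

import Mathlib

open Real

/-- The modified Bessel function of the first kind of integer order `n`,
`I_n(a) = (1/π) ∫_0^π e^{a cos θ} cos(nθ) dθ`. -/
noncomputable def besselI (n : ℕ) (a : ℝ) : ℝ :=
  (1 / π) * ∫ θ in (0 : ℝ)..π, Real.exp (a * Real.cos θ) * Real.cos (n * θ)

namespace BesselTuranAux

open MeasureTheory Set Function

noncomputable def EE (a : ℝ) (k : ℕ) : ℝ := ∫ θ in (0:ℝ)..π, exp (a * cos θ) * cos θ ^ k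

lemma contE (a : ℝ) (k : ℕ) : Continuous fun θ : ℝ => exp (a * cos θ) * cos θ ^ k := by fun_prop

lemma E0_pos (a : ℝ) : 0 < EE a 0 := by
  apply intervalIntegral.intervalIntegral_pos_of_pos (f := fun θ => exp (a * cos θ) * cos θ ^ 0)
  · exact (contE a 0).intervalIntegrable _ _
  · intro x; positivity
  · exact pi_pos

lemma besselI_zero (a : ℝ) : besselI 0 a = (1/π) * EE a 0 := by
  unfold besselI EE
  norm_num

lemma besselI_one (a : ℝ) : besselI 1 a = (1/π) * EE a 1 := by
  unfold besselI EE
  norm_num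

lemma hasDerivAt_intE (g : ℝ → ℝ) (hg : Continuous g) (hgb : ∀ θ, |g θ| ≤ 1) (a : ℝ) :
    HasDerivAt (fun x => ∫ θ in (0:ℝ)..π, Real.exp (x * Real.cos θ) * g θ)
      (∫ θ in (0:ℝ)..π, Real.cos θ * Real.exp (a * Real.cos θ) * g θ) a := by
  have h := intervalIntegral.hasDerivAt_integral_of_dominated_loc_of_deriv_le
    (F := fun (x : ℝ) (θ : ℝ) => Real.exp (x * Real.cos θ) * g θ)
    (F' := fun (x : ℝ) (θ : ℝ) => Real.cos θ * Real.exp (x * Real.cos θ) * g θ)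
    (bound := fun _ => Real.exp (|a| + 1)) (μ := volume) (a := 0) (b := π)
    (x₀ := a) (s := Metric.ball a 1) (Metric.ball_mem_nhds a one_pos) ?_ ?_ ?_ ?_ ?_ ?_
  · exact h.2
  · filter_upwards with x
    exact (Continuous.aestronglyMeasurable (by fun_prop))
  · exact (by fun_prop : Continuous fun θ => Real.exp (a * Real.cos θ) * g θ).intervalIntegrable _ _
  · exact (Continuous.aestronglyMeasurable (by fun_prop))
  · filter_upwards with t _ x hx
    have h1 : |Real.cos t| ≤ 1 := Real.abs_cos_le_one t
    have h2 : |g t| ≤ 1 := hgb t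
    have h3 : Real.exp (x * Real.cos t) ≤ Real.exp (|a| + 1) := by
      apply Real.exp_le_exp.2
      have : |x| ≤ |a| + 1 := by
        have := Metric.mem_ball.1 hx
        rw [Real.dist_eq] at this
        have h4 := abs_sub_abs_le_abs_sub x a
        linarith
      calc x * Real.cos t ≤ |x * Real.cos t| := le_abs_self _
        _ = |x| * |Real.cos t| := abs_mul _ _
        _ ≤ (|a| + 1) * 1 := by
            apply mul_le_mul this h1 (abs_nonneg _) (by positivity)
        _ = |a| + 1 := mul_one _
    have hexp : (0:ℝ) < Real.exp (x * Real.cos t) := Real.exp_pos _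
    calc ‖Real.cos t * Real.exp (x * Real.cos t) * g t‖
        = |Real.cos t| * Real.exp (x * Real.cos t) * |g t| := by
          rw [norm_eq_abs, abs_mul, abs_mul, abs_of_pos hexp]
      _ ≤ 1 * Real.exp (|a| + 1) * 1 := by
          apply mul_le_mul (mul_le_mul h1 h3 hexp.le (by norm_num)) h2 (abs_nonneg _) (by positivity)
      _ = Real.exp (|a| + 1) := by ring
  · exact intervalIntegrable_const
  · filter_upwards with t _ x _
    have h1 : HasDerivAt (fun x : ℝ => x * Real.cos t) (Real.cos t) x := hasDerivAt_mul_const _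
    have h2 := (h1.exp).mul_const (g t)
    refine h2.congr_deriv ?_
    ring

lemma hasDerivAt_besselI0 (a : ℝ) : HasDerivAt (besselI 0) ((1/π) * EE a 1) a := by
  have h := (hasDerivAt_intE (fun θ => Real.cos ((0:ℕ) * θ)) (by fun_prop)
    (fun θ => Real.abs_cos_le_one _) a).const_mul (1/π)
  have he : (∫ θ in (0:ℝ)..π, Real.cos θ * Real.exp (a * Real.cos θ) * Real.cos ((0:ℕ) * θ))
      = EE a 1 := by
    unfold EE
    apply intervalIntegral.integral_congr
    intro θ _
    push_cast
    simp
    ring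
  rw [he] at h
  exact h

lemma hasDerivAt_besselI1 (a : ℝ) : HasDerivAt (besselI 1) ((1/π) * EE a 2) a := by
  have h := (hasDerivAt_intE (fun θ => Real.cos ((1:ℕ) * θ)) (by fun_prop)
    (fun θ => Real.abs_cos_le_one _) a).const_mul (1/π)
  have he : (∫ θ in (0:ℝ)..π, Real.cos θ * Real.exp (a * Real.cos θ) * Real.cos ((1:ℕ) * θ))
      = EE a 2 := by
    unfold EE
    apply intervalIntegral.integral_congr
    intro θ _
    push_cast
    simp
    ring
  rw [he] at h
  exact h

lemma ident1 (a : ℝ) : EE a 1 = a * (EE a 0 - EE a 2) := by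
  have hd : ∀ θ ∈ uIcc (0:ℝ) π, HasDerivAt (fun θ => exp (a * cos θ) * sin θ)
      (exp (a * cos θ) * cos θ ^ 1 - a * (exp (a * cos θ) * cos θ ^ 0)
        + a * (exp (a * cos θ) * cos θ ^ 2)) θ := by
    intro θ _
    have h1 : HasDerivAt (fun θ : ℝ => exp (a * cos θ)) (exp (a * cos θ) * (a * (-sin θ))) θ :=
      ((Real.hasDerivAt_cos θ).const_mul a).exp
    have h2 := h1.mul (Real.hasDerivAt_sin θ)
    refine h2.congr_deriv ?_
    have hs := Real.sin_sq_add_cos_sq θ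
    linear_combination (-(a * exp (a * cos θ))) * hs
  have hint : IntervalIntegrable (fun θ => exp (a * cos θ) * cos θ ^ 1
      - a * (exp (a * cos θ) * cos θ ^ 0) + a * (exp (a * cos θ) * cos θ ^ 2)) volume 0 π :=
    (by fun_prop : Continuous _).intervalIntegrable _ _
  have key := intervalIntegral.integral_eq_sub_of_hasDerivAt hd hint
  simp only [Real.sin_pi, Real.sin_zero, mul_zero, sub_zero] at key
  rw [intervalIntegral.integral_add ((by fun_prop : Continuous _).intervalIntegrable _ _)
      ((by fun_prop : Continuous _).intervalIntegrable _ _),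
    intervalIntegral.integral_sub ((contE a 1).intervalIntegrable _ _)
      ((by fun_prop : Continuous _).intervalIntegrable _ _),
    intervalIntegral.integral_const_mul, intervalIntegral.integral_const_mul] at key
  unfold EE
  linarith [key]

lemma ident2 (a : ℝ) : a * (EE a 1 - EE a 3) = 2 * EE a 2 - EE a 0 := by
  have hd : ∀ θ ∈ uIcc (0:ℝ) π, HasDerivAt (fun θ => exp (a * cos θ) * sin θ * cos θ)
      (-(a * (exp (a * cos θ) * cos θ ^ 1)) + a * (exp (a * cos θ) * cos θ ^ 3)
        + 2 * (exp (a * cos θ) * cos θ ^ 2) - exp (a * cos θ) * cos θ ^ 0) θ := by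
    intro θ _
    have h1 : HasDerivAt (fun θ : ℝ => exp (a * cos θ)) (exp (a * cos θ) * (a * (-sin θ))) θ :=
      ((Real.hasDerivAt_cos θ).const_mul a).exp
    have h2 := (h1.mul (Real.hasDerivAt_sin θ)).mul (Real.hasDerivAt_cos θ)
    simp only [Pi.mul_apply] at h2
    refine h2.congr_deriv ?_
    have hs := Real.sin_sq_add_cos_sq θ
    linear_combination (-(a * exp (a * cos θ) * cos θ + exp (a * cos θ))) * hs
  have hint : IntervalIntegrable _ volume 0 π :=
    (by fun_prop : Continuous fun θ => -(a * (exp (a * cos θ) * cos θ ^ 1))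
      + a * (exp (a * cos θ) * cos θ ^ 3)
      + 2 * (exp (a * cos θ) * cos θ ^ 2) - exp (a * cos θ) * cos θ ^ 0).intervalIntegrable _ _
  have key := intervalIntegral.integral_eq_sub_of_hasDerivAt hd hint
  simp only [Real.sin_pi, Real.sin_zero, mul_zero, sub_zero, zero_mul] at key
  rw [intervalIntegral.integral_sub (((by fun_prop : Continuous _).intervalIntegrable _ _))
      ((contE a 0).intervalIntegrable _ _),
    intervalIntegral.integral_add ((by fun_prop : Continuous _).intervalIntegrable _ _)
      ((by fun_prop : Continuous _).intervalIntegrable _ _),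
    intervalIntegral.integral_add ((by fun_prop : Continuous _).intervalIntegrable _ _)
      ((by fun_prop : Continuous _).intervalIntegrable _ _),
    intervalIntegral.integral_neg,
    intervalIntegral.integral_const_mul, intervalIntegral.integral_const_mul,
    intervalIntegral.integral_const_mul] at key
  unfold EE
  linarith [key]
lemma innerCont {F : ℝ → ℝ → ℝ} (hF : Continuous (uncurry F)) (θ : ℝ) :
    Continuous (F θ) := hF.comp (Continuous.prodMk_right θ)

lemma paramCont {F : ℝ → ℝ → ℝ} (hF : Continuous (uncurry F)) :
    Continuous fun θ => ∫ φ in (0:ℝ)..π, F θ φ :=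
  intervalIntegral.continuous_parametric_intervalIntegral_of_continuous' hF 0 π

lemma iint_add (F G : ℝ → ℝ → ℝ) (hF : Continuous (uncurry F)) (hG : Continuous (uncurry G)) :
    (∫ θ in (0:ℝ)..π, ∫ φ in (0:ℝ)..π, (F θ φ + G θ φ))
      = (∫ θ in (0:ℝ)..π, ∫ φ in (0:ℝ)..π, F θ φ)
        + ∫ θ in (0:ℝ)..π, ∫ φ in (0:ℝ)..π, G θ φ := by
  have h1 : ∀ θ : ℝ, (∫ φ in (0:ℝ)..π, (F θ φ + G θ φ))
      = (∫ φ in (0:ℝ)..π, F θ φ) + ∫ φ in (0:ℝ)..π, G θ φ := fun θ =>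
    intervalIntegral.integral_add ((innerCont hF θ).intervalIntegrable _ _)
      ((innerCont hG θ).intervalIntegrable _ _)
  simp_rw [h1]
  exact intervalIntegral.integral_add ((paramCont hF).intervalIntegrable _ _)
    ((paramCont hG).intervalIntegrable _ _)

lemma iint_sub (F G : ℝ → ℝ → ℝ) (hF : Continuous (uncurry F)) (hG : Continuous (uncurry G)) :
    (∫ θ in (0:ℝ)..π, ∫ φ in (0:ℝ)..π, (F θ φ - G θ φ))
      = (∫ θ in (0:ℝ)..π, ∫ φ in (0:ℝ)..π, F θ φ)
        - ∫ θ in (0:ℝ)..π, ∫ φ in (0:ℝ)..π, G θ φ := by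
  have h1 : ∀ θ : ℝ, (∫ φ in (0:ℝ)..π, (F θ φ - G θ φ))
      = (∫ φ in (0:ℝ)..π, F θ φ) - ∫ φ in (0:ℝ)..π, G θ φ := fun θ =>
    intervalIntegral.integral_sub ((innerCont hF θ).intervalIntegrable _ _)
      ((innerCont hG θ).intervalIntegrable _ _)
  simp_rw [h1]
  exact intervalIntegral.integral_sub ((paramCont hF).intervalIntegrable _ _)
    ((paramCont hG).intervalIntegrable _ _)

lemma swap_iint (F : ℝ → ℝ → ℝ) (hF : Continuous (uncurry F)) :
    (∫ θ in (0:ℝ)..π, ∫ φ in (0:ℝ)..π, F θ φ)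
      = ∫ θ in (0:ℝ)..π, ∫ φ in (0:ℝ)..π, F φ θ := by
  have hle := pi_pos.le
  have hInt : Integrable (uncurry F)
      ((volume.restrict (Ioc (0:ℝ) π)).prod (volume.restrict (Ioc (0:ℝ) π))) := by
    rw [Measure.prod_restrict]
    exact (hF.continuousOn.integrableOn_compact (isCompact_Icc.prod isCompact_Icc)).mono_set
      (Set.prod_mono Ioc_subset_Icc_self Ioc_subset_Icc_self)
  simp_rw [intervalIntegral.integral_of_le hle]
  exact MeasureTheory.integral_integral_swap hInt

noncomputable def FD (a θ φ : ℝ) : ℝ :=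
  exp (a * cos θ) * exp (a * cos φ) * (cos θ ^ 3 - cos θ * cos φ ^ 2)

noncomputable def GG (a θ φ : ℝ) : ℝ :=
  exp (a * cos θ) * exp (a * cos φ) * ((cos θ + cos φ) * (cos θ - cos φ) ^ 2)

noncomputable def GN (a θ φ : ℝ) : ℝ :=
  exp (-(a * cos θ)) * exp (-(a * cos φ)) * ((cos θ + cos φ) * (cos θ - cos φ) ^ 2)

noncomputable def HH (a θ φ : ℝ) : ℝ :=
  (exp (a * cos θ) * exp (a * cos φ) - exp (-(a * cos θ)) * exp (-(a * cos φ)))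
    * ((cos θ + cos φ) * (cos θ - cos φ) ^ 2)

lemma contFD (a : ℝ) : Continuous (uncurry (FD a)) := by unfold FD uncurry; fun_prop
lemma contFD' (a : ℝ) : Continuous (uncurry (fun θ φ => FD a φ θ)) := by
  unfold FD uncurry; fun_prop
lemma contGG (a : ℝ) : Continuous (uncurry (GG a)) := by unfold GG uncurry; fun_prop
lemma contGN (a : ℝ) : Continuous (uncurry (GN a)) := by unfold GN uncurry; fun_prop
lemma contHH (a : ℝ) : Continuous (uncurry (HH a)) := by unfold HH uncurry; fun_prop

lemma step1 (a : ℝ) : (∫ θ in (0:ℝ)..π, ∫ φ in (0:ℝ)..π, FD a θ φ)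
    = EE a 3 * EE a 0 - EE a 1 * EE a 2 := by
  have inner : ∀ θ : ℝ, (∫ φ in (0:ℝ)..π, FD a θ φ)
      = (exp (a * cos θ) * cos θ ^ 3) * EE a 0 - (exp (a * cos θ) * cos θ ^ 1) * EE a 2 := by
    intro θ
    have hpt : ∀ φ : ℝ, FD a θ φ = (exp (a * cos θ) * cos θ ^ 3) * (exp (a * cos φ) * cos φ ^ 0)
        - (exp (a * cos θ) * cos θ ^ 1) * (exp (a * cos φ) * cos φ ^ 2) := by
      intro φ; unfold FD; ring
    simp_rw [hpt]
    rw [intervalIntegral.integral_sub ((by fun_prop : Continuous _).intervalIntegrable _ _)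
        ((by fun_prop : Continuous _).intervalIntegrable _ _),
      intervalIntegral.integral_const_mul, intervalIntegral.integral_const_mul]
    rfl
  simp_rw [inner]
  rw [intervalIntegral.integral_sub ((by fun_prop : Continuous _).intervalIntegrable _ _)
      ((by fun_prop : Continuous _).intervalIntegrable _ _),
    intervalIntegral.integral_mul_const, intervalIntegral.integral_mul_const]
  rfl

lemma step2 (a : ℝ) : 2 * (EE a 3 * EE a 0 - EE a 1 * EE a 2)
    = ∫ θ in (0:ℝ)..π, ∫ φ in (0:ℝ)..π, GG a θ φ := by
  have hswap := swap_iint (FD a) (contFD a)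
  have hadd := iint_add (FD a) (fun θ φ => FD a φ θ) (contFD a) (contFD' a)
  have hpt : ∀ θ φ : ℝ, FD a θ φ + FD a φ θ = GG a θ φ := by
    intro θ φ; unfold FD GG; ring
  simp_rw [hpt] at hadd
  rw [hadd]
  linarith [step1 a, hswap]

lemma step3 (a : ℝ) : (∫ θ in (0:ℝ)..π, ∫ φ in (0:ℝ)..π, GN a θ φ)
    = -(∫ θ in (0:ℝ)..π, ∫ φ in (0:ℝ)..π, GG a θ φ) := by
  have o1 : (∫ θ in (0:ℝ)..π, ∫ φ in (0:ℝ)..π, GN a (π - θ) φ)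
      = ∫ θ in (0:ℝ)..π, ∫ φ in (0:ℝ)..π, GN a θ φ := by
    have h := intervalIntegral.integral_comp_sub_left
      (a := 0) (b := π) (fun θ => ∫ φ in (0:ℝ)..π, GN a θ φ) π
    simpa using h
  have i1 : ∀ θ : ℝ, (∫ φ in (0:ℝ)..π, GN a (π - θ) φ)
      = -(∫ φ in (0:ℝ)..π, GG a θ φ) := by
    intro θ
    have h := intervalIntegral.integral_comp_sub_left
      (a := 0) (b := π) (fun φ => GN a (π - θ) φ) π
    have h' : (∫ φ in (0:ℝ)..π, GN a (π - θ) (π - φ)) = ∫ φ in (0:ℝ)..π, GN a (π - θ) φ := by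
      simpa using h
    rw [← h', ← intervalIntegral.integral_neg]
    apply intervalIntegral.integral_congr
    intro φ _
    unfold GN GG
    simp only [Real.cos_pi_sub, mul_neg, neg_neg]
    ring
  rw [← o1]
  simp_rw [i1]
  rw [intervalIntegral.integral_neg]

lemma step4 (a : ℝ) : (∫ θ in (0:ℝ)..π, ∫ φ in (0:ℝ)..π, HH a θ φ)
    = 2 * ∫ θ in (0:ℝ)..π, ∫ φ in (0:ℝ)..π, GG a θ φ := by
  have hpt : ∀ θ φ : ℝ, HH a θ φ = GG a θ φ - GN a θ φ := by
    intro θ φ; unfold HH GG GN; ring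
  have hsub := iint_sub (GG a) (GN a) (contGG a) (contGN a)
  simp_rw [← hpt] at hsub
  rw [hsub, step3]
  ring

lemma HH_nonneg {a : ℝ} (ha : 0 ≤ a) (θ φ : ℝ) : 0 ≤ HH a θ φ := by
  have key : 0 ≤ (exp (a * cos θ) * exp (a * cos φ)
      - exp (-(a * cos θ)) * exp (-(a * cos φ))) * (cos θ + cos φ) := by
    rw [← Real.exp_add, ← Real.exp_add]
    rcases le_total 0 (cos θ + cos φ) with h | h
    · refine mul_nonneg ?_ h
      rw [sub_nonneg]
      apply Real.exp_le_exp.2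
      nlinarith
    · have hle : exp (a * cos θ + a * cos φ) ≤ exp (-(a * cos θ) + -(a * cos φ)) := by
        apply Real.exp_le_exp.2; nlinarith
      nlinarith [Real.exp_pos (a * cos θ + a * cos φ)]
  unfold HH
  rw [← mul_assoc]
  exact mul_nonneg key (sq_nonneg _)

lemma HH_pos {a θ φ : ℝ} (ha : 0 < a) (h1 : cos θ < cos φ) (h2 : -cos θ < cos φ) :
    0 < HH a θ φ := by
  unfold HH
  apply mul_pos
  · rw [← Real.exp_add, ← Real.exp_add, sub_pos]
    apply Real.exp_lt_exp.2
    nlinarith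
  · apply mul_pos (by linarith)
    nlinarith

lemma inner_pos {a : ℝ} (ha : 0 < a) {θ : ℝ} (hθ : θ ∈ Ioo (0:ℝ) π) :
    0 < ∫ φ in (0:ℝ)..π, HH a θ φ := by
  set m := min θ (π - θ) with hm
  have hm0 : 0 < m := lt_min hθ.1 (by linarith [hθ.2])
  have hmθ : m ≤ θ := min_le_left _ _
  have hmπ : m ≤ π - θ := min_le_right _ _
  have hmle : m ≤ π := by linarith [hθ.2]
  have hint1 : IntervalIntegrable (HH a θ) volume 0 m :=
    (innerCont (contHH a) θ).intervalIntegrable _ _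
  have hint2 : IntervalIntegrable (HH a θ) volume m π :=
    (innerCont (contHH a) θ).intervalIntegrable _ _
  have hsplit := intervalIntegral.integral_add_adjacent_intervals hint1 hint2
  have pos1 : 0 < ∫ φ in (0:ℝ)..m, HH a θ φ := by
    apply intervalIntegral.intervalIntegral_pos_of_pos_on hint1 _ hm0
    intro φ hφ
    have hφθ : φ < θ := lt_of_lt_of_le hφ.2 hmθ
    have hφπθ : φ < π - θ := lt_of_lt_of_le hφ.2 hmπ
    have hc1 : cos θ < cos φ :=
      Real.cos_lt_cos_of_nonneg_of_le_pi hφ.1.le (by linarith [hθ.2]) hφθ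
    have hc2 : cos (π - θ) < cos φ :=
      Real.cos_lt_cos_of_nonneg_of_le_pi hφ.1.le (by linarith [hθ.1]) hφπθ
    rw [Real.cos_pi_sub] at hc2
    exact HH_pos ha hc1 hc2
  have pos2 : (0:ℝ) ≤ ∫ φ in m..π, HH a θ φ :=
    intervalIntegral.integral_nonneg hmle (fun u _ => HH_nonneg ha.le θ u)
  linarith [hsplit]

lemma iintHH_pos {a : ℝ} (ha : 0 < a) :
    0 < ∫ θ in (0:ℝ)..π, ∫ φ in (0:ℝ)..π, HH a θ φ := by
  apply intervalIntegral.intervalIntegral_pos_of_pos_on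
    ((paramCont (contHH a)).intervalIntegrable _ _) _ pi_pos
  intro θ hθ
  exact inner_pos ha hθ

lemma turan {a : ℝ} (ha : 0 < a) : EE a 1 * EE a 2 < EE a 3 * EE a 0 := by
  have h := iintHH_pos ha
  rw [step4 a] at h
  nlinarith [step2 a]

end BesselTuranAux

theorem bessel_ratio_deriv_lt (a : ℝ) (ha : 0 < a) :
    deriv (fun t => besselI 1 t / besselI 0 t) a <
      (1 - (besselI 1 a / besselI 0 a) ^ 2) / 2 := by
  open BesselTuranAux in
  have hπ : (0:ℝ) < π := Real.pi_pos
  have hE0 : 0 < EE a 0 := E0_pos a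
  have hne : besselI 0 a ≠ 0 := by
    rw [besselI_zero]; positivity
  have hdiv := (hasDerivAt_besselI1 a).div (hasDerivAt_besselI0 a) hne
  rw [show (fun t => besselI 1 t / besselI 0 t) = besselI 1 / besselI 0 from rfl, hdiv.deriv, besselI_zero, besselI_one]
  set e0 := EE a 0
  set e1 := EE a 1
  set e2 := EE a 2
  set e3 := EE a 3
  have hid : e1^2 - (2*e2 - e0)*e0 = a*(e3*e0 - e1*e2) := by
    linear_combination e1 * (ident1 a) + e0 * (ident2 a)
  have ht : e1*e2 < e3*e0 := turan ha
  have hkey : 2*(e2*e0) - e1^2 < e0^2 := by nlinarith [mul_pos ha (sub_pos.2 ht)]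
  have hL : ((1/π*e2)*(1/π*e0) - (1/π*e1)*(1/π*e1)) / (1/π*e0)^2 = (e2*e0 - e1^2)/e0^2 := by
    rw [div_eq_div_iff (by positivity) (by positivity)]
    field_simp
  have hR : (1 - ((1/π*e1)/(1/π*e0))^2)/2 = (e0^2 - e1^2)/(2*e0^2) := by
    rw [div_eq_div_iff (by norm_num) (by positivity)]
    field_simp
  rw [hL, hR, div_lt_div_iff₀ (by positivity) (by positivity)]
  nlinarith [mul_lt_mul_of_pos_right hkey (pow_pos hE0 2)]
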